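/- Suppose {(R_j, B_j, L_j)}_{j≥1} forms a Riesz sequence tower with bounds C_j ≤ D_j where ∏C_j > 0 and ∏D_j < ∞, and the associated infinite convolution measure μ = δ_{𝐑_1⁻¹B_1}∗δ_{𝐑_2⁻¹B_2}∗⋯ satisfies the no-overlap condition. Let Λ = ⋃_{n≥1} Λ_n where Λ_n = L_1 + R_1ᵀL_2 + ⋯ + (R_1ᵀ⋯R_{n-1}ᵀ)L_n. Then the exponentials {e^{2πi⟨λ,x⟩} : λ ∈ Λ} form a Riesz sequence for L²(μ) with bounds ∏_{j=1}^∞ C_j and ∏_{j=1}^∞ D_j. -/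

import Mathlib

open Complex Matrix Finset

noncomputable section

/-- Real version of an integer matrix. -/
def realMat {d : ℕ} (R : Matrix (Fin d) (Fin d) ℤ) : Matrix (Fin d) (Fin d) ℝ :=
  R.map (Int.cast)

/-- `R` is expanding: all (complex) eigenvalues have modulus strictly greater than 1. -/
def Expanding {d : ℕ} (R : Matrix (Fin d) (Fin d) ℤ) : Prop :=
  ∀ z : ℂ, (R.map (Int.cast : ℤ → ℂ)).charpoly.IsRoot z → 1 < ‖z‖

/-- Euclidean inner product on `ℝ^d`. -/
def ip {d : ℕ} (x y : Fin d → ℝ) : ℝ := ∑ i, x i * y i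

/-- The vector `e_{R,λ} = (1/√#B) (e^{2πi⟨R⁻¹b,λ⟩})_{b∈B} ∈ ℂ^{#B}`. -/
def eVec {d : ℕ} (R : Matrix (Fin d) (Fin d) ℤ) (B : Finset (Fin d → ℤ))
    (lam : Fin d → ℤ) : B → ℂ :=
  fun b => ((Real.sqrt B.card : ℂ))⁻¹ *
    Complex.exp (2 * Real.pi * Complex.I *
      (ip ((realMat R)⁻¹ *ᵥ (fun j => ((b : Fin d → ℤ) j : ℝ))) (fun i => (lam i : ℝ))))

/-- `(R,B,L)` is a frame triple with bounds `C ≤ D`. -/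
def IsFrameTriple {d : ℕ} (R : Matrix (Fin d) (Fin d) ℤ) (B L : Finset (Fin d → ℤ))
    (C D : ℝ) : Prop :=
  ∀ x : B → ℂ,
    C * ∑ b, ‖x b‖ ^ 2 ≤ ∑ lam ∈ L, ‖∑ b, x b * (starRingEnd ℂ) (eVec R B lam b)‖ ^ 2 ∧
    ∑ lam ∈ L, ‖∑ b, x b * (starRingEnd ℂ) (eVec R B lam b)‖ ^ 2 ≤ D * ∑ b, ‖x b‖ ^ 2

/-- `(R,B,L)` is a Riesz sequence triple with bounds `C ≤ D`. -/
def IsRieszTriple {d : ℕ} (R : Matrix (Fin d) (Fin d) ℤ) (B L : Finset (Fin d → ℤ))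
    (C D : ℝ) : Prop :=
  ∀ a : L → ℂ,
    C * ∑ lam, ‖a lam‖ ^ 2 ≤ ∑ b, ‖∑ lam, a lam * eVec R B lam b‖ ^ 2 ∧
    ∑ b, ‖∑ lam, a lam * eVec R B lam b‖ ^ 2 ≤ D * ∑ lam, ‖a lam‖ ^ 2


/-- `𝐑_n = R_n ⋯ R_1` (with 0-based indexing: `bigR R n = R (n-1) * ⋯ * R 0`). -/
def bigR {d : ℕ} (R : ℕ → Matrix (Fin d) (Fin d) ℤ) : ℕ → Matrix (Fin d) (Fin d) ℤ
  | 0 => 1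
  | n + 1 => R n * bigR R n

def castVec {d : ℕ} (v : Fin d → ℤ) : Fin d → ℝ := fun i => (v i : ℝ)

/-- The point `𝐑_n⁻¹𝐛 = ∑_{k=1}^n 𝐑_k⁻¹ b_k` associated to a digit tuple. -/
def tuplePoint {d n : ℕ} (R : ℕ → Matrix (Fin d) (Fin d) ℤ) (B : ℕ → Finset (Fin d → ℤ))
    (t : (j : Fin n) → (B (j : ℕ))) : Fin d → ℝ :=
  ∑ j : Fin n, (realMat (bigR R ((j : ℕ) + 1)))⁻¹ *ᵥ castVec (t j)

/-- The frequency `λ = ∑_{k=1}^n (R_1ᵀ⋯R_{k-1}ᵀ) l_k ∈ Λ_n` associated to a tuple. -/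
def tupleFreq {d n : ℕ} (R : ℕ → Matrix (Fin d) (Fin d) ℤ) (L : ℕ → Finset (Fin d → ℤ))
    (l : (j : Fin n) → (L (j : ℕ))) : Fin d → ℤ :=
  ∑ j : Fin n, (bigR R (j : ℕ))ᵀ *ᵥ ((l j : Fin d → ℤ))

/-- The concatenated exponential vector entry
`(1/√(∏ #B_j)) e^{2πi ⟨𝐑_n⁻¹𝐛, λ⟩}` for the triple `(𝐑_n, 𝐁_n, Λ_n)`. -/
def bigEVec {d n : ℕ} (R : ℕ → Matrix (Fin d) (Fin d) ℤ) (B L : ℕ → Finset (Fin d → ℤ))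
    (t : (j : Fin n) → (B (j : ℕ))) (l : (j : Fin n) → (L (j : ℕ))) : ℂ :=
  ((Real.sqrt (∏ j ∈ Finset.range n, ((B j).card : ℝ)) : ℂ))⁻¹ *
    Complex.exp (2 * Real.pi * Complex.I *
      (ip (tuplePoint R B t) (castVec (tupleFreq R L l))))


open MeasureTheory

/-- The level-`n` measure `μ_n = δ_{𝐑_1⁻¹B_1} ∗ ⋯ ∗ δ_{𝐑_n⁻¹B_n}`, realized as the uniform
measure on the points `∑_{k=1}^n 𝐑_k⁻¹ b_k`, `b_k ∈ B_k`. -/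
def muLevel {d : ℕ} (R : ℕ → Matrix (Fin d) (Fin d) ℤ) (B : ℕ → Finset (Fin d → ℤ))
    (n : ℕ) : Measure (Fin d → ℝ) :=
  (∏ j ∈ Finset.range n, ((B j).card : ENNReal))⁻¹ •
    ∑ t : (j : Fin n) → (B (j : ℕ)), Measure.dirac (tuplePoint R B t)

/-- The tail attractor `K_n = {∑_{k=n+1}^∞ 𝐑_k⁻¹ b_k : b_k ∈ B_k}`. -/
def tailSet {d : ℕ} (R : ℕ → Matrix (Fin d) (Fin d) ℤ) (B : ℕ → Finset (Fin d → ℤ))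
    (n : ℕ) : Set (Fin d → ℝ) :=
  {x | ∃ b : ℕ → (Fin d → ℤ), (∀ k, b k ∈ B (n + k)) ∧
    x = ∑' k : ℕ, (realMat (bigR R (n + k + 1)))⁻¹ *ᵥ castVec (b k)}

/-- The cell `K_{𝐛,n} = 𝐑_n⁻¹𝐛 + K_n` attached to a digit tuple `𝐛 ∈ 𝐁_n`. -/
def cell {d n : ℕ} (R : ℕ → Matrix (Fin d) (Fin d) ℤ) (B : ℕ → Finset (Fin d → ℤ))
    (t : (j : Fin n) → (B (j : ℕ))) : Set (Fin d → ℝ) :=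
  (fun y => tuplePoint R B t + y) '' tailSet R B n

/-- The no-overlap condition for `μ`. -/
def NoOverlap {d : ℕ} (R : ℕ → Matrix (Fin d) (Fin d) ℤ) (B : ℕ → Finset (Fin d → ℤ))
    (μ : Measure (Fin d → ℝ)) : Prop :=
  ∀ (n : ℕ) (t t' : (j : Fin n) → (B (j : ℕ))), t ≠ t' →
    μ (cell R B t ∩ cell R B t') = 0

/-- The Fourier transform `μ̂(y) = ∫ e^{-2πi⟨y,x⟩} dμ(x)`. -/
def fourierTf {d : ℕ} (μ : Measure (Fin d → ℝ)) (y : Fin d → ℝ) : ℂ :=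
  ∫ x, Complex.exp (-(2 * Real.pi * Complex.I) * (ip y x)) ∂μ

/-- `Λ = ⋃_n Λ_n`, `Λ_n = L_1 + R_1ᵀ L_2 + ⋯ + (R_1ᵀ⋯R_{n-1}ᵀ) L_n`. -/
def freqSet {d : ℕ} (R : ℕ → Matrix (Fin d) (Fin d) ℤ) (L : ℕ → Finset (Fin d → ℤ)) :
    Set (Fin d → ℤ) :=
  {v | ∃ (n : ℕ) (l : (j : Fin n) → (L (j : ℕ))), v = tupleFreq R L l}

-- ==================== auxiliary lemmas ====================

section Aux
variable {d : ℕ}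

lemma ip_comm (x y : Fin d → ℝ) : ip x y = ip y x := by
  unfold ip; exact Finset.sum_congr rfl fun i _ => mul_comm _ _

lemma ip_add_right (x y z : Fin d → ℝ) : ip x (y + z) = ip x y + ip x z := by
  unfold ip; rw [← Finset.sum_add_distrib]
  exact Finset.sum_congr rfl fun i _ => by simp [Pi.add_apply, mul_add]

lemma ip_sum_left {ι : Type*} (s : Finset ι) (f : ι → Fin d → ℝ) (y : Fin d → ℝ) :
    ip (∑ j ∈ s, f j) y = ∑ j ∈ s, ip (f j) y := by
  unfold ip
  rw [Finset.sum_comm]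
  exact Finset.sum_congr rfl fun i _ => by simp [Finset.sum_apply, Finset.sum_mul]

lemma ip_transpose (A : Matrix (Fin d) (Fin d) ℝ) (x y : Fin d → ℝ) :
    ip x (Aᵀ *ᵥ y) = ip (A *ᵥ x) y := by
  unfold ip
  simp only [Matrix.mulVec, dotProduct, Matrix.transpose_apply,
    Finset.mul_sum, Finset.sum_mul]
  rw [Finset.sum_comm]
  exact Finset.sum_congr rfl fun i _ => Finset.sum_congr rfl fun k _ => by ring

lemma castVec_mulVec (M : Matrix (Fin d) (Fin d) ℤ) (v : Fin d → ℤ) :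
    castVec (M *ᵥ v) = realMat M *ᵥ castVec v := by
  ext i
  simp [castVec, realMat, Matrix.mulVec, dotProduct]

lemma realMat_mul (A B : Matrix (Fin d) (Fin d) ℤ) :
    realMat (A * B) = realMat A * realMat B := by
  simpa [realMat] using (Matrix.map_mul (f := Int.castRingHom ℝ) (L := A) (M := B))

lemma realMat_one : realMat (1 : Matrix (Fin d) (Fin d) ℤ) = 1 := by
  simp [realMat, Matrix.map_one]

lemma realMat_transpose (A : Matrix (Fin d) (Fin d) ℤ) :
    realMat Aᵀ = (realMat A)ᵀ := rfl

lemma exp_ip_int (u v : Fin d → ℤ) :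
    Complex.exp (2 * Real.pi * Complex.I * (ip (castVec u) (castVec v))) = 1 := by
  have : (ip (castVec u) (castVec v) : ℂ) = ((∑ i, u i * v i : ℤ) : ℂ) := by
    push_cast [ip, castVec]; norm_num
  rw [this, mul_comm]
  rw [show ((2:ℂ) * Real.pi * Complex.I) = 2 * (Real.pi:ℂ) * Complex.I by ring]
  exact Complex.exp_int_mul_two_pi_mul_I _

lemma det_realMat_ne_zero {R : Matrix (Fin d) (Fin d) ℤ} (h : Expanding R) :
    (realMat R).det ≠ 0 := by
  intro hdet
  have hZ : R.det = 0 := by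
    have : ((R.det : ℤ) : ℝ) = (realMat R).det := by
      simpa [realMat] using (RingHom.map_det (Int.castRingHom ℝ) R)
    exact_mod_cast this.trans hdet
  have hC : (R.map (Int.cast : ℤ → ℂ)).det = 0 := by
    have : ((R.det : ℤ) : ℂ) = (R.map (Int.cast : ℤ → ℂ)).det := by
      simpa using (RingHom.map_det (Int.castRingHom ℂ) R)
    rw [← this, hZ]; simp
  have hroot : (R.map (Int.cast : ℤ → ℂ)).charpoly.IsRoot 0 := by
    have h0 : (R.map (Int.cast : ℤ → ℂ)).charpoly.coeff 0 = 0 := by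
      have := Matrix.det_eq_sign_charpoly_coeff (R.map (Int.cast : ℤ → ℂ))
      rw [hC] at this
      have hne : ((-1 : ℂ)) ^ Fintype.card (Fin d) ≠ 0 := by
        simp [pow_ne_zero]
      field_simp at this
      exact (mul_eq_zero.1 this.symm).resolve_left hne
    rwa [Polynomial.IsRoot, ← Polynomial.coeff_zero_eq_eval_zero]
  have := h 0 hroot
  simp at this
  linarith

lemma castVec_add (u v : Fin d → ℤ) : castVec (u + v) = castVec u + castVec v := by
  ext i; simp [castVec]

end Aux

section BigR
variable {d : ℕ} {R : ℕ → Matrix (Fin d) (Fin d) ℤ} (hexp : ∀ j, Expanding (R j))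
include hexp

lemma det_bigR_ne_zero (n : ℕ) : (realMat (bigR R n)).det ≠ 0 := by
  induction n with
  | zero => simp [bigR, realMat_one]
  | succ n ih =>
      rw [show bigR R (n+1) = R n * bigR R n from rfl, realMat_mul, Matrix.det_mul]
      exact mul_ne_zero (det_realMat_ne_zero (hexp n)) ih

lemma bigR_mul_inv {j n : ℕ} (h : j ≤ n) :
    ∃ M : Matrix (Fin d) (Fin d) ℤ,
      realMat (bigR R n) * (realMat (bigR R j))⁻¹ = realMat M := by
  induction n, h using Nat.le_induction with
  | base =>
      exact ⟨1, by rw [Matrix.mul_nonsing_inv _ (isUnit_iff_ne_zero.2 (det_bigR_ne_zero hexp j)),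
        realMat_one]⟩
  | succ n hn ih =>
      obtain ⟨M, hM⟩ := ih
      exact ⟨R n * M, by
        rw [show bigR R (n+1) = R n * bigR R n from rfl, realMat_mul, Matrix.mul_assoc, hM,
          ← realMat_mul]⟩

lemma exp_cross {j n : ℕ} (hj : j < n) (b m : Fin d → ℤ) :
    Complex.exp (2 * Real.pi * Complex.I *
      (ip ((realMat (bigR R (j+1)))⁻¹ *ᵥ castVec b) (castVec ((bigR R n)ᵀ *ᵥ m)))) = 1 := by
  obtain ⟨M, hM⟩ := bigR_mul_inv hexp (Nat.succ_le_of_lt hj)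
  have h1 : castVec ((bigR R n)ᵀ *ᵥ m) = (realMat (bigR R n))ᵀ *ᵥ castVec m := by
    rw [castVec_mulVec, realMat_transpose]
  rw [h1, ip_transpose, Matrix.mulVec_mulVec, hM, ← castVec_mulVec]
  exact exp_ip_int _ _

lemma mulVec_bigR_inv_succ (n : ℕ) (x : Fin d → ℝ) :
    realMat (bigR R n) *ᵥ ((realMat (bigR R (n+1)))⁻¹ *ᵥ x)
      = (realMat (R n))⁻¹ *ᵥ x := by
  rw [show bigR R (n+1) = R n * bigR R n from rfl, realMat_mul, Matrix.mul_inv_rev,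
    Matrix.mulVec_mulVec, ← Matrix.mul_assoc,
    Matrix.mul_nonsing_inv _ (isUnit_iff_ne_zero.2 (det_bigR_ne_zero hexp n)), Matrix.one_mul]

end BigR

section Snoc
variable {d : ℕ} (R : ℕ → Matrix (Fin d) (Fin d) ℤ) (B L : ℕ → Finset (Fin d → ℤ))

lemma tuplePoint_snoc {n : ℕ} (t' : (j : Fin n) → (B (j : ℕ))) (b : ↥(B n)) :
    tuplePoint R B (Fin.snoc t' b : (j : Fin (n+1)) → (B (j : ℕ)))
      = tuplePoint R B t' + (realMat (bigR R (n+1)))⁻¹ *ᵥ castVec b := by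
  unfold tuplePoint
  rw [Fin.sum_univ_castSucc]
  simp [Fin.snoc_castSucc, Fin.snoc_last]

lemma tupleFreq_snoc {n : ℕ} (l' : (j : Fin n) → (L (j : ℕ))) (m : ↥(L n)) :
    tupleFreq R L (Fin.snoc l' m : (j : Fin (n+1)) → (L (j : ℕ)))
      = tupleFreq R L l' + (bigR R n)ᵀ *ᵥ (m : Fin d → ℤ) := by
  unfold tupleFreq
  rw [Fin.sum_univ_castSucc]
  simp [Fin.snoc_castSucc, Fin.snoc_last]

lemma bigEVec_snoc {n : ℕ} (hexp : ∀ j, Expanding (R j))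
    (t' : (j : Fin n) → (B (j : ℕ))) (b : ↥(B n))
    (l' : (j : Fin n) → (L (j : ℕ))) (m : ↥(L n)) :
    bigEVec R B L (Fin.snoc t' b : (j : Fin (n+1)) → (B (j : ℕ)))
        (Fin.snoc l' m : (j : Fin (n+1)) → (L (j : ℕ)))
      = bigEVec R B L t' l' * eVec (R n) (B n) m b *
        Complex.exp (2 * Real.pi * Complex.I *
          (ip ((realMat (bigR R (n+1)))⁻¹ *ᵥ castVec b) (castVec (tupleFreq R L l')))) := by
  unfold bigEVec
  rw [tuplePoint_snoc, tupleFreq_snoc, castVec_add]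
  -- split the normalization
  have hns : Real.sqrt (∏ j ∈ Finset.range (n+1), ((B j).card : ℝ))
      = Real.sqrt (∏ j ∈ Finset.range n, ((B j).card : ℝ)) * Real.sqrt ((B n).card : ℝ) := by
    rw [Finset.prod_range_succ, Real.sqrt_mul (Finset.prod_nonneg fun j _ => Nat.cast_nonneg _)]
  rw [hns]
  -- expand the inner product
  set P' := tuplePoint R B t' with hP'
  set v := (realMat (bigR R (n+1)))⁻¹ *ᵥ castVec b with hv
  set Λ' := castVec (tupleFreq R L l') with hL'
  set M := castVec ((bigR R n)ᵀ *ᵥ (m : Fin d → ℤ)) with hM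
  have hip : ip (P' + v) (Λ' + M) = (ip P' Λ' + ip P' M) + (ip v Λ' + ip v M) := by
    simp only [ip, Pi.add_apply, add_mul, mul_add, Finset.sum_add_distrib]
    ring
  rw [hip]
  have hPM : Complex.exp (2 * Real.pi * Complex.I * (ip P' M : ℝ)) = 1 := by
    rw [hP', hM]
    unfold tuplePoint
    rw [ip_sum_left]
    push_cast
    rw [Finset.mul_sum, Complex.exp_sum]
    refine Finset.prod_eq_one fun j _ => ?_
    exact exp_cross hexp (j.isLt) _ _
  have hvM : ip v M = ip ((realMat (R n))⁻¹ *ᵥ castVec (b : Fin d → ℤ))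
      (castVec (m : Fin d → ℤ)) := by
    rw [hM, castVec_mulVec, realMat_transpose, ip_transpose, hv, mulVec_bigR_inv_succ hexp]
  have hexpand : Complex.exp (2 * Real.pi * Complex.I * (((ip P' Λ' + ip P' M) + (ip v Λ' + ip v M) : ℝ) : ℂ))
      = Complex.exp (2 * Real.pi * Complex.I * (ip P' Λ' : ℝ)) *
        Complex.exp (2 * Real.pi * Complex.I * (ip P' M : ℝ)) *
        (Complex.exp (2 * Real.pi * Complex.I * (ip v Λ' : ℝ)) *
         Complex.exp (2 * Real.pi * Complex.I * (ip v M : ℝ))) := by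
    rw [← Complex.exp_add, ← Complex.exp_add, ← Complex.exp_add]
    push_cast
    ring_nf
  rw [hexpand, hPM, mul_one]
  unfold eVec
  rw [hvM]
  show _ = _ * ((((Real.sqrt ((B n).card : ℝ)) : ℂ))⁻¹ *
    Complex.exp (2 * Real.pi * Complex.I *
      (ip ((realMat (R n))⁻¹ *ᵥ castVec (b : Fin d → ℤ)) (castVec (m : Fin d → ℤ)) : ℝ))) * _
  push_cast
  ring

end Snoc

section Tower
variable {d : ℕ} (R : ℕ → Matrix (Fin d) (Fin d) ℤ) (B L : ℕ → Finset (Fin d → ℤ))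

lemma norm_exp_two_pi_I (r : ℝ) : ‖Complex.exp (2 * Real.pi * Complex.I * r)‖ = 1 := by
  rw [show (2*Real.pi*Complex.I*(r:ℂ)) = ((2*Real.pi*r : ℝ) : ℂ) * Complex.I by push_cast; ring,
    Complex.norm_exp_ofReal_mul_I]

lemma tower (C D : ℕ → ℝ) (hexp : ∀ j, Expanding (R j))
    (hCD : ∀ j, 0 < C j ∧ C j ≤ D j)
    (htriple : ∀ j, IsRieszTriple (R j) (B j) (L j) (C j) (D j)) :
    ∀ (n : ℕ) (a : ((j : Fin n) → (L (j : ℕ))) → ℂ),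
      (∏ j ∈ Finset.range n, C j) * ∑ l, ‖a l‖ ^ 2 ≤
          ∑ t : ((j : Fin n) → (B (j : ℕ))), ‖∑ l, a l * bigEVec R B L t l‖ ^ 2 ∧
        ∑ t : ((j : Fin n) → (B (j : ℕ))), ‖∑ l, a l * bigEVec R B L t l‖ ^ 2 ≤
          (∏ j ∈ Finset.range n, D j) * ∑ l, ‖a l‖ ^ 2 := by
  intro n
  induction n with
  | zero =>
      intro a
      have hE : ∀ (t : (j : Fin 0) → (B (j : ℕ))) (l : (j : Fin 0) → (L (j : ℕ))),
          bigEVec R B L t l = 1 := by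
        intro t l
        have h0 : tuplePoint R B t = 0 := by
          unfold tuplePoint; simp
        unfold bigEVec
        rw [h0]
        have : ip (0 : Fin d → ℝ) (castVec (tupleFreq R L l)) = 0 := by simp [ip]
        rw [this]
        simp
      have h1 : ∀ a' : ((j : Fin 0) → (L (j : ℕ))) → ℂ, ∑ l, ‖a' l‖ ^ 2 = ‖a' default‖ ^ 2 :=
        fun a' => Fintype.sum_subsingleton _ _
      constructor
      · rw [Fintype.sum_subsingleton
          (fun t : ((j : Fin 0) → (B (j : ℕ))) => ‖∑ l, a l * bigEVec R B L t l‖ ^ 2) default]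
        simp only [hE, mul_one]
        rw [Fintype.sum_subsingleton (fun l => a l) default, h1 a]
        simp
      · rw [Fintype.sum_subsingleton
          (fun t : ((j : Fin 0) → (B (j : ℕ))) => ‖∑ l, a l * bigEVec R B L t l‖ ^ 2) default]
        simp only [hE, mul_one]
        rw [Fintype.sum_subsingleton (fun l => a l) default, h1 a]
        simp
  | succ n IH =>
      intro a
      set Pn := ∏ j ∈ Finset.range n, C j with hPn
      set Qn := ∏ j ∈ Finset.range n, D j with hQn
      have hPn0 : 0 ≤ Pn := Finset.prod_nonneg fun j _ => (hCD j).1.le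
      have hQn0 : 0 ≤ Qn := Finset.prod_nonneg fun j _ =>
        le_trans (hCD j).1.le (hCD j).2
      -- the twisted coefficients
      set ph : ↥(B n) → ((j : Fin n) → (L (j : ℕ))) → ℂ := fun b l' =>
        Complex.exp (2 * Real.pi * Complex.I *
          (ip ((realMat (bigR R (n+1)))⁻¹ *ᵥ castVec (b : Fin d → ℤ))
            (castVec (tupleFreq R L l')))) with hph
      set af : ↥(B n) → ((j : Fin n) → (L (j : ℕ))) → ℂ := fun b l' =>
        (∑ m : ↥(L n), a (Fin.snoc l' m) * eVec (R n) (B n) m b) * ph b l' with haf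
      -- reindexing of the l-sum
      have h1 : ∀ (b : ↥(B n)) (t' : (j : Fin n) → (B (j : ℕ))),
          ∑ l : ((j : Fin (n+1)) → (L (j : ℕ))),
              a l * bigEVec R B L (Fin.snoc t' b : (j : Fin (n+1)) → (B (j : ℕ))) l
            = ∑ l', af b l' * bigEVec R B L t' l' := by
        intro b t'
        rw [← Fintype.sum_equiv (Fin.snocEquiv (fun j : Fin (n+1) => ((L (j : ℕ) : Finset _) : Type _)))
            (fun p => a (Fin.snocEquiv _ p) *
              bigEVec R B L (Fin.snoc t' b : (j : Fin (n+1)) → (B (j : ℕ))) (Fin.snocEquiv _ p))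
            (fun l => a l * bigEVec R B L (Fin.snoc t' b : (j : Fin (n+1)) → (B (j : ℕ))) l)
            (fun p => rfl)]
        rw [Fintype.sum_prod_type]
        rw [Finset.sum_comm]
        refine Finset.sum_congr rfl fun l' _ => ?_
        simp only [haf, hph, Finset.sum_mul]
        refine Finset.sum_congr rfl fun m _ => ?_
        have := bigEVec_snoc R B L hexp t' b l' m
        simp only [Fin.snocEquiv, Equiv.coe_fn_mk]
        rw [this]
        ring
      -- reindexing of the t-sum
      have h2 : ∑ t : ((j : Fin (n+1)) → (B (j : ℕ))), ‖∑ l, a l * bigEVec R B L t l‖ ^ 2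
          = ∑ b : ↥(B n), ∑ t' : ((j : Fin n) → (B (j : ℕ))),
              ‖∑ l', af b l' * bigEVec R B L t' l'‖ ^ 2 := by
        rw [← Fintype.sum_equiv (Fin.snocEquiv (fun j : Fin (n+1) => ((B (j : ℕ) : Finset _) : Type _)))
            (fun p => ‖∑ l, a l * bigEVec R B L (Fin.snocEquiv _ p) l‖ ^ 2)
            (fun t => ‖∑ l, a l * bigEVec R B L t l‖ ^ 2) (fun p => rfl)]
        rw [Fintype.sum_prod_type]
        exact Finset.sum_congr rfl fun b _ => Finset.sum_congr rfl fun t' _ => by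
          simp only [Fin.snocEquiv, Equiv.coe_fn_mk]
          rw [h1 b t']
      -- the norm of the twisted coefficients
      have h3 : ∀ (b : ↥(B n)) (l' : (j : Fin n) → (L (j : ℕ))),
          ‖af b l'‖ ^ 2 = ‖∑ m : ↥(L n), a (Fin.snoc l' m) * eVec (R n) (B n) m b‖ ^ 2 := by
        intro b l'
        simp only [haf, hph, norm_mul, norm_exp_two_pi_I, mul_one]
      -- reindexing of the coefficient-norm sum
      have h4 : ∑ l : ((j : Fin (n+1)) → (L (j : ℕ))), ‖a l‖ ^ 2
          = ∑ l' : ((j : Fin n) → (L (j : ℕ))), ∑ m : ↥(L n),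
              ‖a (Fin.snoc l' m)‖ ^ 2 := by
        rw [← Fintype.sum_equiv (Fin.snocEquiv (fun j : Fin (n+1) => ((L (j : ℕ) : Finset _) : Type _)))
            (fun p => ‖a (Fin.snocEquiv _ p)‖ ^ 2)
            (fun l => ‖a l‖ ^ 2) (fun p => rfl)]
        rw [Fintype.sum_prod_type, Finset.sum_comm]
        rfl
      -- middle quantity
      have hmid : ∀ b : ↥(B n), True := fun _ => trivial
      have hlow : ∀ b : ↥(B n),
          Pn * ∑ l', ‖af b l'‖ ^ 2 ≤ ∑ t', ‖∑ l', af b l' * bigEVec R B L t' l'‖ ^ 2 :=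
        fun b => (IH (af b)).1
      have hhigh : ∀ b : ↥(B n),
          ∑ t', ‖∑ l', af b l' * bigEVec R B L t' l'‖ ^ 2 ≤ Qn * ∑ l', ‖af b l'‖ ^ 2 :=
        fun b => (IH (af b)).2
      have h5 : ∑ b : ↥(B n), ∑ l', ‖af b l'‖ ^ 2
          = ∑ l' : ((j : Fin n) → (L (j : ℕ))), ∑ b : ↥(B n),
            ‖∑ m : ↥(L n), a (Fin.snoc l' m) * eVec (R n) (B n) m b‖ ^ 2 := by
        simp only [h3]
        exact Finset.sum_comm
      have h6low : ∀ l' : ((j : Fin n) → (L (j : ℕ))),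
          C n * ∑ m : ↥(L n), ‖a (Fin.snoc l' m)‖ ^ 2 ≤
            ∑ b : ↥(B n),
              ‖∑ m : ↥(L n), a (Fin.snoc l' m) * eVec (R n) (B n) m b‖ ^ 2 :=
        fun l' => (htriple n (fun m => a (Fin.snoc l' m))).1
      have h6high : ∀ l' : ((j : Fin n) → (L (j : ℕ))),
          ∑ b : ↥(B n),
              ‖∑ m : ↥(L n), a (Fin.snoc l' m) * eVec (R n) (B n) m b‖ ^ 2 ≤
            D n * ∑ m : ↥(L n), ‖a (Fin.snoc l' m)‖ ^ 2 :=
        fun l' => (htriple n (fun m => a (Fin.snoc l' m))).2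
      rw [Finset.prod_range_succ, Finset.prod_range_succ, h2, h4, ← hPn, ← hQn]
      constructor
      · calc Pn * C n * ∑ l' : ((j : Fin n) → (L (j : ℕ))), ∑ m : ↥(L n), ‖a (Fin.snoc l' m)‖ ^ 2
            = Pn * ∑ l' : ((j : Fin n) → (L (j : ℕ))),
                C n * ∑ m : ↥(L n), ‖a (Fin.snoc l' m)‖ ^ 2 := by
              simp only [Finset.mul_sum, Finset.sum_mul, mul_assoc]
          _ ≤ Pn * ∑ l' : ((j : Fin n) → (L (j : ℕ))), ∑ b : ↥(B n),
                ‖∑ m : ↥(L n), a (Fin.snoc l' m) * eVec (R n) (B n) m b‖ ^ 2 :=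
              mul_le_mul_of_nonneg_left (Finset.sum_le_sum fun l' _ => h6low l') hPn0
          _ = ∑ b : ↥(B n), Pn * ∑ l' : ((j : Fin n) → (L (j : ℕ))), ‖af b l'‖ ^ 2 := by
              rw [← Finset.mul_sum, h5]
          _ ≤ ∑ b : ↥(B n), ∑ t', ‖∑ l', af b l' * bigEVec R B L t' l'‖ ^ 2 :=
              Finset.sum_le_sum fun b _ => hlow b
      · calc ∑ b : ↥(B n), ∑ t', ‖∑ l', af b l' * bigEVec R B L t' l'‖ ^ 2
            ≤ ∑ b : ↥(B n), Qn * ∑ l', ‖af b l'‖ ^ 2 :=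
              Finset.sum_le_sum fun b _ => hhigh b
          _ = Qn * ∑ l' : ((j : Fin n) → (L (j : ℕ))), ∑ b : ↥(B n),
                ‖∑ m : ↥(L n), a (Fin.snoc l' m) * eVec (R n) (B n) m b‖ ^ 2 := by
              rw [← Finset.mul_sum, h5]
          _ ≤ Qn * ∑ l' : ((j : Fin n) → (L (j : ℕ))),
                D n * ∑ m : ↥(L n), ‖a (Fin.snoc l' m)‖ ^ 2 :=
              mul_le_mul_of_nonneg_left (Finset.sum_le_sum fun l' _ => h6high l') hQn0
          _ = Qn * D n * ∑ l' : ((j : Fin n) → (L (j : ℕ))),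
                ∑ m : ↥(L n), ‖a (Fin.snoc l' m)‖ ^ 2 := by
              simp only [Finset.mul_sum, Finset.sum_mul, mul_assoc]

end Tower

section Pad
open scoped Classical
variable {d : ℕ} (R : ℕ → Matrix (Fin d) (Fin d) ℤ) (L : ℕ → Finset (Fin d → ℤ))

/-- Pad a tuple with zeros. -/
def padTuple (h0L : ∀ j, (0 : Fin d → ℤ) ∈ L j) {m n : ℕ} (h : m ≤ n)
    (l : (j : Fin m) → (L (j : ℕ))) : (j : Fin n) → (L (j : ℕ)) :=
  fun j => if h' : (j : ℕ) < m then l ⟨(j : ℕ), h'⟩ else ⟨0, h0L (j : ℕ)⟩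

lemma tupleFreq_padTuple (h0L : ∀ j, (0 : Fin d → ℤ) ∈ L j) {m n : ℕ} (h : m ≤ n)
    (l : (j : Fin m) → (L (j : ℕ))) :
    tupleFreq R L (padTuple L h0L h l) = tupleFreq R L l := by
  set f : ℕ → (Fin d → ℤ) := fun k =>
    if hk : k < m then (bigR R k)ᵀ *ᵥ ((l ⟨k, hk⟩ : Fin d → ℤ)) else 0 with hf
  have h1 : tupleFreq R L (padTuple L h0L h l) = ∑ k ∈ Finset.range n, f k := by
    rw [← Fin.sum_univ_eq_sum_range]
    unfold tupleFreq
    refine Finset.sum_congr rfl fun j _ => ?_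
    by_cases hj : (j : ℕ) < m
    · simp [hf, hj, padTuple]
    · simp [hf, hj, padTuple, Matrix.mulVec_zero]
  have h2 : tupleFreq R L l = ∑ k ∈ Finset.range m, f k := by
    rw [← Fin.sum_univ_eq_sum_range]
    unfold tupleFreq
    refine Finset.sum_congr rfl fun j _ => ?_
    simp [hf, j.isLt]
  rw [h1, h2]
  refine (Finset.sum_subset (Finset.range_subset_range.2 h) fun k _ hk => ?_).symm
  rw [Finset.mem_range, not_lt] at hk
  simp [hf, Nat.not_lt.2 hk]

lemma sum_reindex {M : Type*} [AddCommMonoid M] {n : ℕ}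
    (S : Finset (Fin d → ℤ)) (rep : (Fin d → ℤ) → ((j : Fin n) → (L (j : ℕ))))
    (hrep : ∀ lam ∈ S, tupleFreq R L (rep lam) = lam)
    (a : (Fin d → ℤ) → ℂ) (F : ℂ → (Fin d → ℤ) → M) (hF : ∀ lam, F 0 lam = 0) :
    ∑ l : ((j : Fin n) → (L (j : ℕ))),
        F (if tupleFreq R L l ∈ S ∧ l = rep (tupleFreq R L l) then a (tupleFreq R L l) else 0)
          (tupleFreq R L l)
      = ∑ lam ∈ S, F (a lam) lam := by
  have hinj : ∀ x ∈ S, ∀ y ∈ S, rep x = rep y → x = y := by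
    intro x hx y hy hxy
    rw [← hrep x hx, ← hrep y hy, hxy]
  rw [← Finset.sum_subset (Finset.subset_univ (S.image rep)) ?hz]
  · rw [Finset.sum_image hinj]
    refine Finset.sum_congr rfl fun lam hlam => ?_
    rw [if_pos]
    · rw [hrep lam hlam]
    · refine ⟨by rw [hrep lam hlam]; exact hlam, ?_⟩
      rw [hrep lam hlam]
  · intro l _ hl
    rw [if_neg, hF]
    intro ⟨hc1, hc2⟩
    exact hl (Finset.mem_image.2 ⟨tupleFreq R L l, hc1, hc2.symm⟩)

end Pad

section Integral
open MeasureTheory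
variable {d : ℕ} (R : ℕ → Matrix (Fin d) (Fin d) ℤ) (B : ℕ → Finset (Fin d → ℤ))

lemma integral_muLevel (n : ℕ) (g : (Fin d → ℝ) → ℝ) (hg : Continuous g) :
    ∫ x, g x ∂(muLevel R B n)
      = (∏ j ∈ Finset.range n, ((B j).card : ℝ))⁻¹ *
          ∑ t : (j : Fin n) → (B (j : ℕ)), g (tuplePoint R B t) := by
  have hint : ∀ x : (Fin d → ℝ), Integrable g (Measure.dirac x) := fun x => by
    refine ⟨hg.aestronglyMeasurable, ?_⟩
    rw [HasFiniteIntegral, lintegral_dirac]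
    exact ENNReal.coe_lt_top
  unfold muLevel
  rw [integral_smul_measure, integral_finset_sum_measure (fun t _ => hint _)]
  congr 1
  · rw [ENNReal.toReal_inv]
    congr 1
    rw [ENNReal.toReal_prod]
    exact Finset.prod_congr rfl fun j _ => by simp
  · exact Finset.sum_congr rfl fun t _ => integral_dirac _ _

end Integral


theorem riesz_sequence_tower_gives_riesz_sequence {d : ℕ}
    (R : ℕ → Matrix (Fin d) (Fin d) ℤ) (B L : ℕ → Finset (Fin d → ℤ)) (C D : ℕ → ℝ)
    (hexp : ∀ j, Expanding (R j))
    (h0B : ∀ j, (0 : Fin d → ℤ) ∈ B j) (h0L : ∀ j, (0 : Fin d → ℤ) ∈ L j)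
    (hCD : ∀ j, 0 < C j ∧ C j ≤ D j)
    (htriple : ∀ j, IsRieszTriple (R j) (B j) (L j) (C j) (D j))
    (hPlim : Filter.Tendsto (fun n => ∏ j ∈ Finset.range n, C j) Filter.atTop (nhds P))
    (hQlim : Filter.Tendsto (fun n => ∏ j ∈ Finset.range n, D j) Filter.atTop (nhds Q))
    (μ : Measure (Fin d → ℝ)) [IsProbabilityMeasure μ]
    (hno : NoOverlap R B μ)
    (hweak : ∀ g : BoundedContinuousFunction (Fin d → ℝ) ℝ,
      Filter.Tendsto (fun n => ∫ x, g x ∂(muLevel R B n)) Filter.atTop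
        (nhds (∫ x, g x ∂μ))) :
    ∀ a : (Fin d → ℤ) →₀ ℂ, (↑a.support : Set (Fin d → ℤ)) ⊆ freqSet R L →
      P * ∑ lam ∈ a.support, ‖a lam‖ ^ 2 ≤
        ∫ x, ‖∑ lam ∈ a.support,
          a lam * Complex.exp (2 * Real.pi * Complex.I * ip (castVec lam) x)‖ ^ 2 ∂μ ∧
      ∫ x, ‖∑ lam ∈ a.support,
          a lam * Complex.exp (2 * Real.pi * Complex.I * ip (castVec lam) x)‖ ^ 2 ∂μ ≤
        Q * ∑ lam ∈ a.support, ‖a lam‖ ^ 2 := by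
  classical
  intro a hsub
  set S := ∑ lam ∈ a.support, ‖a lam‖ ^ 2 with hS
  set f : (Fin d → ℝ) → ℝ := fun x => ‖∑ lam ∈ a.support,
      a lam * Complex.exp (2 * Real.pi * Complex.I * ip (castVec lam) x)‖ ^ 2 with hfdef
  have hipc : ∀ v : Fin d → ℝ, Continuous fun x : (Fin d → ℝ) => ip v x := by
    intro v
    unfold ip
    exact continuous_finset_sum _ fun i _ => continuous_const.mul (continuous_apply i)
  have hcont : Continuous f := by
    apply Continuous.pow
    apply Continuous.norm
    apply continuous_finset_sum _ fun lam _ => ?_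
    exact continuous_const.mul (Complex.continuous_exp.comp (continuous_const.mul
      (Complex.continuous_ofReal.comp (hipc (castVec lam)))))
  set Mb := (∑ lam ∈ a.support, ‖a lam‖) ^ 2 with hMb
  have hbd : ∀ x, ‖f x‖ ≤ Mb := by
    intro x
    rw [Real.norm_eq_abs, _root_.abs_of_nonneg (by positivity)]
    refine pow_le_pow_left₀ (norm_nonneg _) ?_ 2
    refine (norm_sum_le _ _).trans ?_
    refine le_of_eq (Finset.sum_congr rfl fun lam _ => ?_)
    rw [norm_mul, norm_exp_two_pi_I, mul_one]
  set G := BoundedContinuousFunction.ofNormedAddCommGroup f hcont Mb hbd with hGdef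
  have hweakf : Filter.Tendsto (fun n => ∫ x, f x ∂(muLevel R B n)) Filter.atTop
      (nhds (∫ x, f x ∂μ)) := hweak G
  have hrepex : ∀ lam : Fin d → ℤ, ∃ (k : ℕ) (l : (j : Fin k) → (L (j : ℕ))),
      lam ∈ a.support → lam = tupleFreq R L l := by
    intro lam
    by_cases hmem : lam ∈ a.support
    · obtain ⟨k, l, hkl⟩ := hsub (Finset.mem_coe.2 hmem)
      exact ⟨k, l, fun _ => hkl⟩
    · exact ⟨0, fun j => ⟨0, h0L _⟩, fun h => absurd h hmem⟩
  choose kk ll hll using hrepex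
  set N := a.support.sup kk with hN
  have hlevel : ∀ n, N ≤ n →
      (∏ j ∈ Finset.range n, C j) * S ≤ ∫ x, f x ∂(muLevel R B n) ∧
      ∫ x, f x ∂(muLevel R B n) ≤ (∏ j ∈ Finset.range n, D j) * S := by
    intro n hn
    set rep : (Fin d → ℤ) → ((j : Fin n) → (L (j : ℕ))) := fun lam =>
      if h : kk lam ≤ n then padTuple L h0L h (ll lam) else fun j => ⟨0, h0L _⟩ with hrepdef
    have hrep : ∀ lam ∈ a.support, tupleFreq R L (rep lam) = lam := by
      intro lam hlam
      have hk : kk lam ≤ n := le_trans (Finset.le_sup hlam) hn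
      rw [hrepdef]
      simp only [hk, dif_pos]
      rw [tupleFreq_padTuple]
      exact (hll lam hlam).symm
    set atil : ((j : Fin n) → (L (j : ℕ))) → ℂ := fun l =>
      if tupleFreq R L l ∈ a.support ∧ l = rep (tupleFreq R L l) then a (tupleFreq R L l)
      else 0 with hatil
    have hE1 : ∑ l, ‖atil l‖ ^ 2 = S := by
      have := sum_reindex R L a.support rep hrep a (fun c _ => ‖c‖ ^ 2)
        (fun lam => by simp)
      rw [hS]
      rw [← this]
    have hcard : 0 < ∏ j ∈ Finset.range n, ((B j).card : ℝ) :=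
      Finset.prod_pos fun j _ => by exact_mod_cast Finset.card_pos.2 ⟨0, h0B j⟩
    have hE2 : ∀ t : ((j : Fin n) → (B (j : ℕ))),
        f (tuplePoint R B t) = (∏ j ∈ Finset.range n, ((B j).card : ℝ)) *
          ‖∑ l, atil l * bigEVec R B L t l‖ ^ 2 := by
      intro t
      have hB2 : ∑ l : ((j : Fin n) → (L (j : ℕ))), atil l *
            Complex.exp (2 * Real.pi * Complex.I *
              (ip (castVec (tupleFreq R L l)) (tuplePoint R B t) : ℝ))
          = ∑ lam ∈ a.support, a lam * Complex.exp (2 * Real.pi * Complex.I *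
              (ip (castVec lam) (tuplePoint R B t) : ℝ)) :=
        sum_reindex R L a.support rep hrep a
          (fun c lam => c * Complex.exp (2 * Real.pi * Complex.I *
            (ip (castVec lam) (tuplePoint R B t) : ℝ))) (fun lam => zero_mul _)
      have h3 : ∑ l, atil l * bigEVec R B L t l
          = ((Real.sqrt (∏ j ∈ Finset.range n, ((B j).card : ℝ)) : ℂ))⁻¹ *
            ∑ lam ∈ a.support, a lam * Complex.exp (2 * Real.pi * Complex.I *
              (ip (castVec lam) (tuplePoint R B t) : ℝ)) := by
        rw [← hB2, Finset.mul_sum]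
        refine Finset.sum_congr rfl fun l _ => ?_
        unfold bigEVec
        rw [ip_comm]
        ring
      rw [hfdef]
      simp only
      rw [h3, norm_mul, mul_pow, norm_inv]
      have hnc : ‖((Real.sqrt (∏ j ∈ Finset.range n, ((B j).card : ℝ)) : ℂ))‖
          = Real.sqrt (∏ j ∈ Finset.range n, ((B j).card : ℝ)) := by
        rw [Complex.norm_real, Real.norm_eq_abs, _root_.abs_of_nonneg (Real.sqrt_nonneg _)]
      rw [hnc, ← mul_assoc]
      rw [show ((Real.sqrt (∏ j ∈ Finset.range n, ((B j).card : ℝ)))⁻¹) ^ 2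
          = ((∏ j ∈ Finset.range n, ((B j).card : ℝ)))⁻¹ by
        rw [← Real.sqrt_inv, Real.sq_sqrt (inv_nonneg.2 hcard.le)]]
      rw [mul_inv_cancel₀ hcard.ne', one_mul]
    have hIL : ∫ x, f x ∂(muLevel R B n) = ∑ t, ‖∑ l, atil l * bigEVec R B L t l‖ ^ 2 := by
      rw [integral_muLevel R B n f hcont]
      rw [Finset.sum_congr rfl fun t _ => hE2 t, ← Finset.mul_sum, ← mul_assoc,
        inv_mul_cancel₀ hcard.ne', one_mul]
    obtain ⟨hlo, hhi⟩ := tower R B L C D hexp hCD htriple n atil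
    rw [hE1] at hlo hhi
    rw [hIL]
    exact ⟨hlo, hhi⟩
  constructor
  · refine le_of_tendsto_of_tendsto (hPlim.mul_const S) hweakf ?_
    filter_upwards [Filter.eventually_ge_atTop N] with n hn
    exact (hlevel n hn).1
  · refine le_of_tendsto_of_tendsto hweakf (hQlim.mul_const S) ?_
    filter_upwards [Filter.eventually_ge_atTop N] with n hn
    exact (hlevel n hn).2

end
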